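/- Let Γ be a quasi-lattice in a metric space, let C > 1, let A ⊆ Γ be such that every point of Γ is within distance C of A, and let K > 0 be such that every ball of radius C in Γ contains at most K points of Γ. Then for every subset S ⊆ Γ one has #S ≤ #(S ∩ ∂_C^Γ S) + K · #(A ∩ S). -/

import Mathlib

open Set Metric

/-- The `r`-boundary of `S` inside `Γ` (with the metric induced from the
ambient space): points of `Γ` at distance `< r` both from `S` and from
`Γ \ S`. (Distance to the empty set is `∞`.) -/
def rBoundary {M : Type*} [MetricSpace M] (Γ S : Set M) (r : ℝ) : Set M :=
  {x ∈ Γ | EMetric.infEdist x S < ENNReal.ofReal r ∧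
    EMetric.infEdist x (Γ \ S) < ENNReal.ofReal r}

lemma encard_biUnion_le_aux {α β : Type*} (K : ℕ∞) :
    ∀ (I : Set α), ∀ f : α → Set β, (∀ a ∈ I, (f a).encard ≤ K) →
      (⋃ a ∈ I, f a).encard ≤ K * I.encard := by
  intro I f hf
  by_cases hI : I.Finite
  · refine Set.Finite.induction_on
      (motive := fun I _ => (∀ a ∈ I, (f a).encard ≤ K) → (⋃ a ∈ I, f a).encard ≤ K * I.encard)
      I hI (by simp) ?_ hf
    clear hf hI I
    intro a I haI hIfin ih hf
    rw [Set.biUnion_insert, Set.encard_insert_of_notMem haI, mul_add, mul_one, add_comm]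
    refine le_trans (Set.encard_union_le _ _) ?_
    gcongr
    · exact hf a (Set.mem_insert _ _)
    · exact ih fun b hb => hf b (Set.mem_insert_of_mem _ hb)
  · rcases eq_or_lt_of_le (zero_le : (0:ℕ∞) ≤ K) with hK0 | hK0
    · have : ⋃ a ∈ I, f a ⊆ ∅ := by
        refine Set.iUnion₂_subset fun a ha => ?_
        have : f a = ∅ := Set.encard_eq_zero.mp
          (le_antisymm (le_trans (hf a ha) hK0.ge) zero_le)
        simp [this]
      simp [Set.subset_empty_iff.mp this]
    · rw [Set.Infinite.encard_eq hI, ENat.mul_top hK0.ne']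
      exact le_top

/-- Let `Γ` be a quasi-lattice in a metric space, `C > 1`, `A ⊆ Γ` a `C`-net in
`Γ`, and `K > 0` a bound for the number of points of `Γ` in any ball of radius
`C`. Then `#S ≤ #(S ∩ ∂_C^Γ S) + K·#(A ∩ S)` for every `S ⊆ Γ`. -/
theorem card_le_boundary_add_net
    {M : Type*} [MetricSpace M] (Γ : Set M)
    (hΓnet : ∃ C₀ > (0:ℝ), ∀ x : M, ∃ a ∈ Γ, dist x a < C₀)
    (hΓlattice : ∀ r : ℝ, 0 ≤ r → ∃ Kr : ℕ, ∀ x : M,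
      (Γ ∩ Metric.ball x r).encard ≤ (Kr : ℕ∞))
    (C : ℝ) (hC : 1 < C)
    (A : Set M) (hA : A ⊆ Γ)
    (hAnet : ∀ x ∈ Γ, ∃ a ∈ A, dist x a < C)
    (K : ℕ∞) (hK : 0 < K)
    (hball : ∀ x ∈ Γ, (Γ ∩ Metric.ball x C).encard ≤ K) :
    ∀ S ⊆ Γ, S.encard ≤ (S ∩ rBoundary Γ S C).encard + K * (A ∩ S).encard := by
  intro S hS
  have hCpos : (0:ℝ) < C := lt_trans one_pos hC
  -- every point of S outside the boundary lies in a ball around some a ∈ A ∩ S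
  have hcover : S \ rBoundary Γ S C ⊆ ⋃ a ∈ A ∩ S, Γ ∩ Metric.ball a C := by
    intro x hx
    obtain ⟨hxS, hxB⟩ := hx
    have hxΓ : x ∈ Γ := hS hxS
    obtain ⟨a, haA, hda⟩ := hAnet x hxΓ
    have haS : a ∈ S := by
      by_contra haS
      apply hxB
      refine ⟨hxΓ, ?_, ?_⟩
      · calc EMetric.infEdist x S ≤ edist x x := EMetric.infEdist_le_edist_of_mem hxS
          _ = 0 := by simp
          _ < ENNReal.ofReal C := by simp [ENNReal.ofReal_pos, hCpos]
      · calc EMetric.infEdist x (Γ \ S) ≤ edist x a :=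
              EMetric.infEdist_le_edist_of_mem ⟨hA haA, haS⟩
          _ < ENNReal.ofReal C := by
              rw [edist_dist]; exact (ENNReal.ofReal_lt_ofReal_iff hCpos).mpr hda
    refine Set.mem_biUnion ⟨haA, haS⟩ ⟨hxΓ, ?_⟩
    rw [Metric.mem_ball]
    exact hda
  have h1 : S.encard ≤ (S ∩ rBoundary Γ S C).encard + (S \ rBoundary Γ S C).encard := by
    refine le_trans (Set.encard_le_encard ?_) (Set.encard_union_le _ _)
    intro x hx
    by_cases h : x ∈ rBoundary Γ S C
    · exact Or.inl ⟨hx, h⟩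
    · exact Or.inr ⟨hx, h⟩
  refine h1.trans ?_
  gcongr
  calc (S \ rBoundary Γ S C).encard ≤ (⋃ a ∈ A ∩ S, Γ ∩ Metric.ball a C).encard :=
        Set.encard_le_encard hcover
    _ ≤ K * (A ∩ S).encard :=
        encard_biUnion_le_aux K (A ∩ S) _ fun a ha => hball a (hA ha.1)
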